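/- The map x ↦ γ̄(x) := ρ(|x|)·x/|x| (with γ̄(0) = 0), where ρ(r) = (1/(2π)) ∫₀^{2π} γ(r sin φ) sin φ dφ for a locally Lipschitz γ : ℝ → ℝ with γ(0) = 0, is locally Lipschitz on ℝ². -/
import Mathlib

open Real

noncomputable def rho (γ : ℝ → ℝ) (r : ℝ) : ℝ :=
  (1 / (2 * π)) * ∫ φ in (0:ℝ)..(2 * π), γ (r * Real.sin φ) * Real.sin φ

lemma locallyLipschitz_exists_lipschitzOnWith {X Y : Type*} [MetricSpace X] [MetricSpace Y]
    {f : X → Y} (hf : LocallyLipschitz f) {s : Set X} (hs : IsCompact s) :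
    ∃ K : NNReal, LipschitzOnWith K f s := by
  have hcont := hf.continuous
  choose K t ht hl using hf
  have hcover : s ⊆ ⋃ x : X, interior (t x) := fun x _ =>
    Set.mem_iUnion.2 ⟨x, mem_interior_iff_mem_nhds.2 (ht x)⟩
  obtain ⟨F, hF⟩ := hs.elim_finite_subcover (fun x => interior (t x))
    (fun _ => isOpen_interior) hcover
  obtain ⟨δ, hδ, hball⟩ := lebesgue_number_lemma_of_metric (ι := F)
    (c := fun i : F => interior (t i)) hs (fun _ => isOpen_interior)
    (fun x hx => by
      obtain ⟨i, hiF, hxi⟩ := Set.mem_iUnion₂.1 (hF hx)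
      exact Set.mem_iUnion.2 ⟨⟨i, hiF⟩, hxi⟩)
  obtain ⟨M, hM⟩ := Metric.isBounded_iff.mp (hs.image hcont).isBounded
  set C : NNReal := (F.sup K) ⊔ Real.toNNReal (M / δ) with hC
  refine ⟨C, lipschitzOnWith_iff_dist_le_mul.2 fun x hx y hy => ?_⟩
  by_cases h : dist x y < δ
  · obtain ⟨i, hi⟩ := hball x hx
    have hxi : x ∈ t i := interior_subset (hi (Metric.mem_ball_self hδ))
    have hyi : y ∈ t i := interior_subset (hi (by simpa [Metric.mem_ball, dist_comm] using h))
    have h1 : dist (f x) (f y) ≤ K i * dist x y :=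
      lipschitzOnWith_iff_dist_le_mul.mp (hl i) x hxi y hyi
    have h2 : (K i : ℝ) ≤ C := by
      have : K i ≤ C := le_trans (Finset.le_sup i.2) le_sup_left
      exact_mod_cast this
    exact h1.trans (mul_le_mul_of_nonneg_right h2 dist_nonneg)
  · push_neg at h
    have hfb : dist (f x) (f y) ≤ M :=
      hM (Set.mem_image_of_mem f hx) (Set.mem_image_of_mem f hy)
    have hM0 : 0 ≤ M := le_trans dist_nonneg (hM (Set.mem_image_of_mem f hx) (Set.mem_image_of_mem f hx))
    have h3 : M ≤ (M / δ) * dist x y := by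
      rw [div_mul_eq_mul_div, le_div_iff₀ hδ]
      exact mul_le_mul_of_nonneg_left h hM0
    have h4 : (M / δ : ℝ) ≤ C := by
      have : (Real.toNNReal (M / δ) : ℝ) ≤ C := by exact_mod_cast le_sup_right (a := F.sup K)
      calc (M / δ : ℝ) ≤ (Real.toNNReal (M / δ) : ℝ) := Real.le_coe_toNNReal _
        _ ≤ C := this
    exact hfb.trans (h3.trans (mul_le_mul_of_nonneg_right h4 dist_nonneg))

lemma rho_lipschitzOn {γ : ℝ → ℝ} (hc : Continuous γ) {K : NNReal} {R : ℝ}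
    (hK : LipschitzOnWith K γ (Set.Icc (-R) R)) {r s : ℝ} (hr : |r| ≤ R) (hs : |s| ≤ R) :
    |rho γ r - rho γ s| ≤ K * |r - s| := by
  have hπ : (0:ℝ) < 2 * π := by positivity
  have hint : ∀ u : ℝ, IntervalIntegrable (fun φ => γ (u * Real.sin φ) * Real.sin φ)
      MeasureTheory.volume 0 (2*π) := fun u =>
    ((hc.comp (continuous_const.mul Real.continuous_sin)).mul Real.continuous_sin).intervalIntegrable _ _
  have hmem : ∀ u : ℝ, |u| ≤ R → ∀ φ : ℝ, u * Real.sin φ ∈ Set.Icc (-R) R := by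
    intro u hu φ
    rw [Set.mem_Icc, ← abs_le, abs_mul]
    calc |u| * |Real.sin φ| ≤ |u| * 1 :=
          mul_le_mul_of_nonneg_left (abs_sin_le_one φ) (abs_nonneg u)
      _ ≤ R := by rwa [mul_one]
  have hdiff : rho γ r - rho γ s = (1/(2*π)) *
      ∫ φ in (0:ℝ)..(2*π), (γ (r * Real.sin φ) * Real.sin φ - γ (s * Real.sin φ) * Real.sin φ) := by
    unfold rho
    rw [intervalIntegral.integral_sub (hint r) (hint s)]
    ring
  have habs : |∫ φ in (0:ℝ)..(2*π),
      (γ (r * Real.sin φ) * Real.sin φ - γ (s * Real.sin φ) * Real.sin φ)| ≤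
      (K * |r - s|) * |2*π - 0| := by
    rw [← Real.norm_eq_abs]
    apply intervalIntegral.norm_integral_le_of_norm_le_const
    intro φ _
    have h1 : |γ (r * Real.sin φ) - γ (s * Real.sin φ)| ≤ K * |r * Real.sin φ - s * Real.sin φ| := by
      have := lipschitzOnWith_iff_dist_le_mul.mp hK _ (hmem r hr φ) _ (hmem s hs φ)
      simpa [Real.dist_eq] using this
    have h2 : |r * Real.sin φ - s * Real.sin φ| = |r - s| * |Real.sin φ| := by
      rw [← sub_mul, abs_mul]
    calc ‖γ (r * Real.sin φ) * Real.sin φ - γ (s * Real.sin φ) * Real.sin φ‖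
        = |γ (r * Real.sin φ) - γ (s * Real.sin φ)| * |Real.sin φ| := by
          rw [← sub_mul]; exact abs_mul _ _
      _ ≤ (K * (|r - s| * |Real.sin φ|)) * |Real.sin φ| := by
          apply mul_le_mul_of_nonneg_right _ (abs_nonneg _)
          rw [← h2]; exact h1
      _ = (K * |r - s|) * (|Real.sin φ| * |Real.sin φ|) := by ring
      _ ≤ (K * |r - s|) * 1 := by
          apply mul_le_mul_of_nonneg_left _ (by positivity)
          calc |Real.sin φ| * |Real.sin φ| ≤ 1 * 1 :=
              mul_le_mul (abs_sin_le_one φ) (abs_sin_le_one φ) (abs_nonneg _) zero_le_one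
            _ = 1 := mul_one 1
      _ = K * |r - s| := mul_one _
  rw [hdiff, abs_mul]
  have : |(1:ℝ)/(2*π)| = 1/(2*π) := abs_of_pos (by positivity)
  rw [this]
  calc 1/(2*π) * |∫ φ in (0:ℝ)..(2*π),
        (γ (r * Real.sin φ) * Real.sin φ - γ (s * Real.sin φ) * Real.sin φ)|
      ≤ 1/(2*π) * ((K * |r - s|) * |2*π - 0|) :=
        mul_le_mul_of_nonneg_left habs (by positivity)
    _ = K * |r - s| := by
        rw [sub_zero, abs_of_pos hπ]; field_simp

lemma rho_zero {γ : ℝ → ℝ} (h0 : γ 0 = 0) : rho γ 0 = 0 := by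
  simp [rho, h0]

lemma key_estimate {E : Type*} [NormedAddCommGroup E] [NormedSpace ℝ E] {γ : ℝ → ℝ} {C R : ℝ}
    (hC : 0 ≤ C) (hρ0 : rho γ 0 = 0)
    (hρ : ∀ r s : ℝ, |r| ≤ R → |s| ≤ R → |rho γ r - rho γ s| ≤ C * |r - s|)
    {x y : E} (hxy : ‖y‖ ≤ ‖x‖) (hx : ‖x‖ ≤ R) :
    ‖rho γ ‖x‖ • ‖x‖⁻¹ • x - rho γ ‖y‖ • ‖y‖⁻¹ • y‖ ≤ 3 * C * ‖x - y‖ := by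
  set r := ‖x‖ with hr
  set s := ‖y‖ with hs
  have hr0 : 0 ≤ r := norm_nonneg x
  have hs0 : 0 ≤ s := norm_nonneg y
  have hR0 : 0 ≤ R := le_trans hr0 hx
  have hrR : |r| ≤ R := by rwa [abs_of_nonneg hr0]
  have hsR : |s| ≤ R := by rw [abs_of_nonneg hs0]; exact hxy.trans hx
  have hbound : ∀ u : ℝ, |u| ≤ R → 0 ≤ u → |rho γ u| ≤ C * u := by
    intro u hu hu0
    have := hρ u 0 hu (by simpa using hR0)
    simpa [hρ0, abs_of_nonneg hu0] using this
  have hdn : |r - s| ≤ ‖x - y‖ := abs_norm_sub_norm_le x y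
  rcases eq_or_lt_of_le hs0 with hse | hsp
  · -- s = 0, so y = 0
    have hy0 : y = 0 := norm_eq_zero.mp hse.symm
    subst hy0
    rw [smul_zero, smul_zero, sub_zero, sub_zero]
    have hln : ‖rho γ r • r⁻¹ • x‖ = |rho γ r| * (|r⁻¹| * r) := by
      rw [norm_smul, norm_smul, Real.norm_eq_abs, Real.norm_eq_abs, ← hr]
    rw [hln]
    rcases eq_or_lt_of_le hr0 with hre | hrp
    · rw [← hre, mul_zero, mul_zero]
      positivity
    · rw [abs_of_pos (inv_pos.mpr hrp), inv_mul_cancel₀ (ne_of_gt hrp), mul_one]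
      have hb := hbound r hrR hr0
      have hxr : ‖x‖ = r := hr.symm
      calc |rho γ r| ≤ C * r := hb
        _ ≤ 3 * C * ‖x‖ := by rw [hxr]; nlinarith
        _ = 3 * C * ‖x‖ := rfl
  · -- 0 < s ≤ r
    have hrp : 0 < r := lt_of_lt_of_le hsp hxy
    have hfx : rho γ r • r⁻¹ • x = (rho γ r / r) • x := by
      rw [smul_smul, div_eq_mul_inv]
    have hfy : rho γ s • s⁻¹ • y = (rho γ s / s) • y := by
      rw [smul_smul, div_eq_mul_inv]
    rw [hfx, hfy]
    have hdecomp : (rho γ r / r) • x - (rho γ s / s) • y =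
        (rho γ r / r) • (x - y) + ((rho γ r / r) - (rho γ s / s)) • y := by module
    rw [hdecomp]
    have h1 : ‖(rho γ r / r) • (x - y)‖ ≤ C * ‖x - y‖ := by
      rw [norm_smul, Real.norm_eq_abs, abs_div, abs_of_pos hrp]
      apply mul_le_mul_of_nonneg_right _ (norm_nonneg _)
      rw [div_le_iff₀ hrp]
      exact hbound r hrR hr0
    have h2 : ‖((rho γ r / r) - (rho γ s / s)) • y‖ ≤ 2 * C * ‖x - y‖ := by
      rw [norm_smul, Real.norm_eq_abs, ← hs]
      have keyeq : ((rho γ r / r) - (rho γ s / s)) * s =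
          (s * (rho γ r - rho γ s) + (s - r) * rho γ s) / r := by
        field_simp
        ring
      have hnum : |s * (rho γ r - rho γ s) + (s - r) * rho γ s| ≤ 2 * C * |r - s| * r := by
        have e1 : |s * (rho γ r - rho γ s)| ≤ s * (C * |r - s|) := by
          rw [abs_mul, abs_of_nonneg hs0]
          exact mul_le_mul_of_nonneg_left (hρ r s hrR hsR) hs0
        have e2 : |(s - r) * rho γ s| ≤ |r - s| * (C * s) := by
          rw [abs_mul, abs_sub_comm]
          exact mul_le_mul_of_nonneg_left (hbound s hsR hs0) (abs_nonneg _)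
        have h3 := abs_add_le (s * (rho γ r - rho γ s)) ((s - r) * rho γ s)
        have h4 : (C * |r - s|) * s ≤ (C * |r - s|) * r :=
          mul_le_mul_of_nonneg_left hxy (mul_nonneg hC (abs_nonneg (r - s)))
        linarith
      have : |((rho γ r / r) - (rho γ s / s)) * s| ≤ 2 * C * |r - s| := by
        rw [keyeq, abs_div, abs_of_pos hrp, div_le_iff₀ hrp]
        exact hnum
      rw [abs_mul, abs_of_nonneg hs0] at this
      calc |rho γ r / r - rho γ s / s| * s ≤ 2 * C * |r - s| := this
        _ ≤ 2 * C * ‖x - y‖ := mul_le_mul_of_nonneg_left hdn (by positivity)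
    calc ‖(rho γ r / r) • (x - y) + ((rho γ r / r) - (rho γ s / s)) • y‖
        ≤ ‖(rho γ r / r) • (x - y)‖ + ‖((rho γ r / r) - (rho γ s / s)) • y‖ := norm_add_le _ _
      _ ≤ C * ‖x - y‖ + 2 * C * ‖x - y‖ := add_le_add h1 h2
      _ = 3 * C * ‖x - y‖ := by ring

theorem stmt_11 (γ : ℝ → ℝ) (hγ : LocallyLipschitz γ) (h0 : γ 0 = 0) :
    LocallyLipschitz (fun x : EuclideanSpace ℝ (Fin 2) => rho γ ‖x‖ • ‖x‖⁻¹ • x) := by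
  intro x₀
  set R : ℝ := ‖x₀‖ + 1 with hR
  obtain ⟨K, hK⟩ := locallyLipschitz_exists_lipschitzOnWith hγ
    (isCompact_Icc : IsCompact (Set.Icc (-R) R))
  refine ⟨3 * K, Metric.closedBall 0 R, Metric.closedBall_mem_nhds_of_mem ?_,
    lipschitzOnWith_iff_dist_le_mul.2 fun x hx y hy => ?_⟩
  · rw [Metric.mem_ball, dist_zero_right]
    linarith [norm_nonneg x₀]
  · rw [Metric.mem_closedBall, dist_zero_right] at hx hy
    have hρ : ∀ r s : ℝ, |r| ≤ R → |s| ≤ R → |rho γ r - rho γ s| ≤ (K : ℝ) * |r - s| :=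
      fun r s hr hs => rho_lipschitzOn hγ.continuous hK hr hs
    have hC : (0:ℝ) ≤ (K : ℝ) := K.coe_nonneg
    have hcoe : ((3 * K : NNReal) : ℝ) = 3 * (K : ℝ) := by push_cast; ring
    rw [dist_eq_norm, dist_eq_norm, hcoe]
    rcases le_total ‖y‖ ‖x‖ with h | h
    · exact key_estimate hC (rho_zero h0) hρ h hx
    · rw [norm_sub_rev, norm_sub_rev x y]
      exact key_estimate hC (rho_zero h0) hρ h hy
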